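/- Let 0 < k₁ < k₂ and d > 0. There exists a constant C > 0 such that for every ξ > k₂, writing Ã = √(ξ² − k₂²) and B̃ = √(ξ² − k₁²), one has e^{−2dB̃} · [ (2ξ² − k₁² − k₂²) · sinh(2dÃ)/Ã + 2B̃ · cosh(2dÃ) ] ≥ C · ξ. (In particular this expression is strictly positive, so the Wronskian has no zeros with |ξ| > k₂, and |W(ξ)| grows at least linearly in |ξ|.) -/

import Mathlib

/-- For `0 < k₁ < k₂` and `d > 0` there is `C > 0` such that for every
`ξ > k₂`, with `Ã = √(ξ²−k₂²)` and `B̃ = √(ξ²−k₁²)`,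
`e^{−2dB̃} [(2ξ² − k₁² − k₂²) sinh(2dÃ)/Ã + 2B̃ cosh(2dÃ)] ≥ C ξ`:
the Wronskian has no zeros beyond `k₂` and grows at least linearly. -/
theorem wronskian_lower_bound_beyond_k2 (k₁ k₂ d : ℝ)
    (h1 : 0 < k₁) (h2 : k₁ < k₂) (hd : 0 < d) :
    ∃ C : ℝ, 0 < C ∧ ∀ ξ : ℝ, k₂ < ξ →
      C * ξ ≤ Real.exp (-(2 * d * Real.sqrt (ξ ^ 2 - k₁ ^ 2))) *
        ((2 * ξ ^ 2 - k₁ ^ 2 - k₂ ^ 2) * Real.sinh (2 * d * Real.sqrt (ξ ^ 2 - k₂ ^ 2)) /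
            Real.sqrt (ξ ^ 2 - k₂ ^ 2) +
          2 * Real.sqrt (ξ ^ 2 - k₁ ^ 2) * Real.cosh (2 * d * Real.sqrt (ξ ^ 2 - k₂ ^ 2))) := by
  have hk2 : 0 < k₂ := h1.trans h2
  set m := Real.sqrt (k₂ ^ 2 - k₁ ^ 2) with hm
  have hm2 : m ^ 2 = k₂ ^ 2 - k₁ ^ 2 := Real.sq_sqrt (by nlinarith)
  have hmpos : 0 < m := Real.sqrt_pos.2 (by nlinarith)
  refine ⟨m / k₂ * Real.exp (-(2 * d * m)), by positivity, ?_⟩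
  intro ξ hξ
  have hξpos : 0 < ξ := hk2.trans hξ
  set A := Real.sqrt (ξ ^ 2 - k₂ ^ 2) with hA
  set B := Real.sqrt (ξ ^ 2 - k₁ ^ 2) with hB
  have hA0 : 0 ≤ A := Real.sqrt_nonneg _
  have hA2 : A ^ 2 = ξ ^ 2 - k₂ ^ 2 := Real.sq_sqrt (by nlinarith)
  have hB2 : B ^ 2 = ξ ^ 2 - k₁ ^ 2 := Real.sq_sqrt (by nlinarith)
  have hBpos : 0 < B := Real.sqrt_pos.2 (by nlinarith)
  have hBm : m ≤ B := by
    rw [hm, hB]; exact Real.sqrt_le_sqrt (by nlinarith)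
  have hBA : B - A ≤ m := by nlinarith
  have hBlow : m / k₂ * ξ ≤ B := by
    have hsq : (m / k₂ * ξ) ^ 2 ≤ B ^ 2 := by
      have ht : (m / k₂ * ξ) ^ 2 = m ^ 2 * ξ ^ 2 / k₂ ^ 2 := by field_simp
      rw [ht, div_le_iff₀ (by positivity)]
      nlinarith [mul_pos h1 h1, sq_nonneg (ξ - k₂)]
    have htpos : 0 ≤ m / k₂ * ξ := by positivity
    nlinarith
  -- first term nonneg
  have hT1 : 0 ≤ (2 * ξ ^ 2 - k₁ ^ 2 - k₂ ^ 2) * Real.sinh (2 * d * A) / A := by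
    apply div_nonneg _ hA0
    apply mul_nonneg (by nlinarith)
    exact Real.sinh_nonneg_iff.2 (by positivity)
  have hcosh : Real.exp (2 * d * A) / 2 ≤ Real.cosh (2 * d * A) := by
    rw [Real.cosh_eq]
    have := Real.exp_pos (-(2 * d * A))
    linarith
  have hexp : Real.exp (-(2 * d * m)) ≤ Real.exp (2 * d * A - 2 * d * B) := by
    apply Real.exp_le_exp.2; nlinarith
  calc m / k₂ * Real.exp (-(2 * d * m)) * ξ
      = (m / k₂ * ξ) * Real.exp (-(2 * d * m)) := by ring
    _ ≤ B * Real.exp (2 * d * A - 2 * d * B) := by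
        apply mul_le_mul hBlow hexp (Real.exp_pos _).le hBpos.le
    _ = Real.exp (-(2 * d * B)) * (2 * B * (Real.exp (2 * d * A) / 2)) := by
        rw [Real.exp_sub, Real.exp_neg]
        field_simp
    _ ≤ Real.exp (-(2 * d * B)) * (2 * B * Real.cosh (2 * d * A)) := by
        apply mul_le_mul_of_nonneg_left _ (Real.exp_pos _).le
        apply mul_le_mul_of_nonneg_left hcosh (by positivity)
    _ ≤ Real.exp (-(2 * d * B)) *
        ((2 * ξ ^ 2 - k₁ ^ 2 - k₂ ^ 2) * Real.sinh (2 * d * A) / A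
          + 2 * B * Real.cosh (2 * d * A)) := by
        apply mul_le_mul_of_nonneg_left _ (Real.exp_pos _).le
        linarith
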